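/- For $K = N = 3$: if nonnegative reals $x_0, x_1, x_2, x_3$ satisfy $x_0 + x_1 + x_2 + x_3 = 1$ and $x_1 + 2x_2 + 3x_3 \leq M$ for some real $M \in [0,3]$, then $3x_0 + x_1 + \tfrac{1}{3}x_2 \geq \max\{3 - 2M, \; \tfrac{5}{3} - \tfrac{2}{3}M, \; 1 - \tfrac{1}{3}M, \; 0\}$. -/
import Mathlib

/-- Fourier–Motzkin elimination step in the `N = K = 3` caching converse example. -/
theorem stmt_12 (M x0 x1 x2 x3 : ℝ) (h0 : 0 ≤ x0) (h1 : 0 ≤ x1) (h2 : 0 ≤ x2) (h3 : 0 ≤ x3)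
    (hM0 : 0 ≤ M) (hM3 : M ≤ 3)
    (hsum : x0 + x1 + x2 + x3 = 1) (hmom : x1 + 2*x2 + 3*x3 ≤ M) :
    3*x0 + x1 + (1/3)*x2
      ≥ max (max (3 - 2*M) (5/3 - (2/3)*M)) (max (1 - (1/3)*M) 0) := by
  simp only [ge_iff_le, max_le_iff]
  refine ⟨⟨by nlinarith, by nlinarith⟩, by nlinarith, by positivity⟩
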